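/- Under the model L^b = C ⊕ W^b with W^b i.i.d. Bernoulli and independent of C, the MAP decoding rule for the message U from L satisfies: argmax_u P(U = u | L = l) = A·l^b ⊕ argmax_w P(W_u^b = w | L = l), where W_u^b = A·W^b and A is the pseudo-inverse of the encoder. That is, MAP decoding of U is equivalent to MAP detection of the message bit-flip sequence. -/

import Mathlib

open MeasureTheory ProbabilityTheory Matrix

/-- Hard decision of an LLR: `1` if negative, `0` otherwise. -/
noncomputable def hardDec (x : ℝ) : ZMod 2 := if x < 0 then 1 else 0

/-- Under `L^b = C ⊕ W^b` with `C = Gᵀ·U` and `A·Gᵀ = I`, MAP decoding of the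
message `U` from `L` is equivalent to MAP detection of the message bit-flip sequence
`W_u^b = A·W^b = A·L^b ⊕ U`: if `u*` is the unique maximizer of `P(U = u | L = l)` and `w*`
the unique maximizer of `P(W_u^b = w | L = l)`, then `u* = A·l^b ⊕ w*`. -/
theorem map_decoding_eq_map_bitflip_detection
    {Ω : Type*} [MeasurableSpace Ω] (μ : Measure Ω) [IsProbabilityMeasure μ]
    (n k : ℕ)
    (G A : Matrix (Fin k) (Fin n) (ZMod 2)) (hA : A * Gᵀ = 1)
    (U : Ω → (Fin k → ZMod 2)) (L : Ω → (Fin n → ℝ))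
    (hU : Measurable U) (hL : Measurable L)
    -- the message bit-flip sequence `W_u^b = A·L^b ⊕ U` (xor is addition over `ZMod 2`)
    (Wub : Ω → (Fin k → ZMod 2))
    (hWub : Wub = fun ω => A.mulVec (fun i => hardDec (L ω i)) + U ω)
    (l : Fin n → ℝ) (hl : μ (L ⁻¹' {l}) ≠ 0)
    (ustar wstar : Fin k → ZMod 2)
    -- `ustar` is the unique MAP estimate of `U` given `L = l`
    (hu : ∀ u, u ≠ ustar →
      μ[|L ⁻¹' {l}] {ω | U ω = u} < μ[|L ⁻¹' {l}] {ω | U ω = ustar})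
    -- `wstar` is the unique MAP estimate of `W_u^b` given `L = l`
    (hw : ∀ w, w ≠ wstar →
      μ[|L ⁻¹' {l}] {ω | Wub ω = w} < μ[|L ⁻¹' {l}] {ω | Wub ω = wstar}) :
    ustar = A.mulVec (fun i => hardDec (l i)) + wstar := by

  set a := A.mulVec (fun i => hardDec (l i)) with ha
  have haa : a + a = 0 := by
    ext i; rw [Pi.add_apply, Pi.zero_apply]; exact CharTwo.add_self_eq_zero _
  have key : ∀ w, μ[|L ⁻¹' {l}] {ω | Wub ω = w} = μ[|L ⁻¹' {l}] {ω | U ω = a + w} := by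
    intro w
    have hs : MeasurableSet (L ⁻¹' {l}) := hL (measurableSet_singleton l)
    rw [cond_apply hs, cond_apply hs]
    congr 1
    apply measure_congr
    have : L ⁻¹' {l} ∩ {ω | Wub ω = w} = L ⁻¹' {l} ∩ {ω | U ω = a + w} := by
      ext ω
      simp only [Set.mem_inter_iff, Set.mem_preimage, Set.mem_singleton_iff,
        Set.mem_setOf_eq, hWub]
      constructor
      · rintro ⟨hLω, hWω⟩
        refine ⟨hLω, ?_⟩
        rw [hLω] at hWω
        rw [← hWω, ← add_assoc, haa, zero_add]
      · rintro ⟨hLω, hUω⟩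
        refine ⟨hLω, ?_⟩
        rw [hLω, hUω, ← add_assoc, haa, zero_add]
    rw [this]
    exact Filter.EventuallyEq.rfl
  by_contra hne
  have h1 : a + ustar ≠ wstar := by
    intro h; apply hne; rw [← h, ← add_assoc]
    rw [haa, zero_add]
  have h2 : a + wstar ≠ ustar := by
    intro h; exact hne h.symm
  have e1 : μ[|L ⁻¹' {l}] {ω | Wub ω = a + ustar} = μ[|L ⁻¹' {l}] {ω | U ω = ustar} := by
    rw [key]; congr 1; ext ω; rw [← add_assoc]
    rw [haa, zero_add]
  have e2 : μ[|L ⁻¹' {l}] {ω | Wub ω = wstar} = μ[|L ⁻¹' {l}] {ω | U ω = a + wstar} := key wstar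
  have c1 := hw (a + ustar) h1
  have c2 := hu (a + wstar) h2
  rw [e1, e2] at c1
  exact absurd (c1.trans c2) (lt_irrefl _)
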